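/- If q(H) > 0, where q(Γ) = ∫_E Σ_{t=0}^∞ p(1-p)^t P^t(y,Γ) ν(dy), then p ∫_E V₁(y) ν(dy) < 1, where V₁(y) = Σ_{t=0}^∞ (1-p)^t {}_H P^t(y,E) for y ∉ H and V₁ = 0 on H. In particular the geometric series Σ_{t=0}^∞ (p ∫_E V₁ dν)^t converges. -/
import Mathlib


open MeasureTheory ProbabilityTheory ENNReal

/-- The `t`-step iterate `P^t` of a transition kernel, with `P^0(x,·) = δ_x`. -/
noncomputable def iterKernel {E : Type*} [MeasurableSpace E] (P : Kernel E E) :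
    ℕ → Kernel E E
  | 0 => Kernel.id
  | t + 1 => P ∘ₖ iterKernel P t

/-- The iterates of the taboo kernel `{}_H P(x,Γ) := P(x, Γ \ H)`, given the
complement `Hᶜ` as a measurable set; `{}_H P^0(x,Γ) = δ_x(Γ \ H)`, so that
`{}_H P^0(x,E) = 1{x ∉ H}`. -/
noncomputable def tabooIter {E : Type*} [MeasurableSpace E] (P : Kernel E E)
    {Hc : Set E} (hHc : MeasurableSet Hc) : ℕ → Kernel E E
  | 0 => Kernel.id.restrict hHc
  | t + 1 => (P.restrict hHc) ∘ₖ tabooIter P hHc t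
instance iterKernel_markov {E : Type*} [MeasurableSpace E] (P : Kernel E E)
    [IsMarkovKernel P] (t : ℕ) : IsMarkovKernel (iterKernel P t) := by
  induction t with
  | zero => exact inferInstanceAs (IsMarkovKernel Kernel.id)
  | succ t ih => exact inferInstanceAs (IsMarkovKernel (P ∘ₖ iterKernel P t))

lemma taboo_le {E : Type*} [MeasurableSpace E] (P : Kernel E E) [IsMarkovKernel P]
    {Hc : Set E} (hHc : MeasurableSet Hc) (t : ℕ) (x : E) :
    tabooIter P hHc t x ≤ iterKernel P t x := by
  induction t generalizing x with
  | zero =>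
    simp only [tabooIter, iterKernel, Kernel.restrict_apply]
    exact Measure.restrict_le_self
  | succ t ih =>
    rw [Measure.le_iff]
    intro s hs
    show (((P.restrict hHc) ∘ₖ tabooIter P hHc t)) x s ≤ (P ∘ₖ iterKernel P t) x s
    rw [Kernel.comp_apply' _ _ _ hs, Kernel.comp_apply' _ _ _ hs]
    refine lintegral_mono' (ih x) fun z => ?_
    rw [Kernel.restrict_apply]
    exact Measure.restrict_le_self s

lemma taboo_univ_le {E : Type*} [MeasurableSpace E] (P : Kernel E E) [IsMarkovKernel P]
    {Hc : Set E} (hHc : MeasurableSet Hc) (t : ℕ) (x : E) :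
    tabooIter P hHc t x Set.univ ≤ iterKernel P t x Hc := by
  cases t with
  | zero =>
    simp [tabooIter, iterKernel, Kernel.restrict_apply]
  | succ t =>
    show (((P.restrict hHc) ∘ₖ tabooIter P hHc t)) x Set.univ ≤ (P ∘ₖ iterKernel P t) x Hc
    rw [Kernel.comp_apply' _ _ _ MeasurableSet.univ, Kernel.comp_apply' _ _ _ hHc]
    refine lintegral_mono' (taboo_le P hHc t x) fun z => ?_
    rw [Kernel.restrict_apply]
    simp

open scoped Classical

/-- If `q(H) > 0`, where `q(Γ) = ∫ Σ_t p(1-p)^t P^t(y,Γ) ν(dy)`, then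
`p ∫ V₁ dν < 1`, where `V₁(y) = Σ_t (1-p)^t {}_H P^t(y,E)` for `y ∉ H` and
`V₁ = 0` on `H`; in particular the geometric series `Σ_t (p ∫ V₁ dν)^t`
converges. -/
theorem stmt8 {E : Type*} [MeasurableSpace E]
    (P : Kernel E E) [IsMarkovKernel P]
    (ν : Measure E) [IsProbabilityMeasure ν]
    (p : ℝ≥0∞) (hp0 : 0 < p) (hp1 : p < 1)
    (H : Set E) (hH : MeasurableSet H)
    (q : Measure E)
    (hq : ∀ Γ : Set E, MeasurableSet Γ →
      q Γ = ∫⁻ y, ∑' t : ℕ, p * (1 - p) ^ t * iterKernel P t y Γ ∂ν)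
    (hqH : 0 < q H)
    (V₁ : E → ℝ≥0∞)
    (hV₁ : ∀ x, V₁ x = if x ∈ H then 0 else
      ∑' t : ℕ, (1 - p) ^ t * tabooIter P hH.compl t x Set.univ) :
    p * ∫⁻ y, V₁ y ∂ν < 1 ∧ ∑' t : ℕ, (p * ∫⁻ y, V₁ y ∂ν) ^ t < ⊤ := by
  have hp_ne_top : p ≠ ⊤ := hp1.trans one_lt_top |>.ne
  -- q univ = 1
  have hsum : ∑' t : ℕ, p * (1 - p) ^ t = 1 := by
    rw [ENNReal.tsum_mul_left, ENNReal.tsum_geometric, ENNReal.sub_sub_cancel one_ne_top hp1.le,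
      ENNReal.mul_inv_cancel hp0.ne' hp_ne_top]
  have hqU : q Set.univ = 1 := by
    rw [hq Set.univ MeasurableSet.univ]
    calc ∫⁻ y, ∑' t : ℕ, p * (1 - p) ^ t * iterKernel P t y Set.univ ∂ν
        = ∫⁻ _, (1 : ℝ≥0∞) ∂ν := by
          refine lintegral_congr fun y => ?_
          simp_rw [measure_univ, mul_one]
          exact hsum
      _ = 1 := by simp
  -- q Hᶜ < 1
  have hqHc : q Hᶜ < 1 := by
    have hadd : q Hᶜ + q H = 1 := by
      rw [← hqU, ← measure_add_measure_compl hH.compl, compl_compl, add_comm]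
    have hqHtop : q H ≠ ⊤ := by
      have h2 : q H ≤ q Set.univ := measure_mono (Set.subset_univ H)
      rw [hqU] at h2
      exact (h2.trans_lt one_lt_top).ne
    calc q Hᶜ = 1 - q H := by rw [← hadd, ENNReal.add_sub_cancel_right hqHtop]
      _ < 1 := ENNReal.sub_lt_self one_ne_top one_ne_zero hqH.ne'
  -- key bound
  have key : p * ∫⁻ y, V₁ y ∂ν ≤ q Hᶜ := by
    rw [hq Hᶜ hH.compl, ← lintegral_const_mul' _ _ hp_ne_top]
    refine lintegral_mono fun y => ?_
    rw [hV₁ y]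
    by_cases hy : y ∈ H
    · simp [hy]
    · simp only [hy, if_false]
      rw [← ENNReal.tsum_mul_left]
      refine ENNReal.tsum_le_tsum fun t => ?_
      rw [← mul_assoc, mul_assoc, mul_assoc]
      exact mul_le_mul_right (mul_le_mul_right (taboo_univ_le P hH.compl t y) _) _
  have hlt : p * ∫⁻ y, V₁ y ∂ν < 1 := lt_of_le_of_lt key hqHc
  refine ⟨hlt, ?_⟩
  rw [ENNReal.tsum_geometric]
  exact ENNReal.inv_lt_top.mpr (tsub_pos_of_lt hlt)
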